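/- The function F₃ : ℝ³ → ℝ defined by F₃(s,λ,r) = (1/2048)·cos(8s)·e^{8λ} + (3/128)·cosh(4s)·e^{−8λ} − (1/32)·(s·sinh(4s) − 4λ·cosh(4s) + 12r·sinh(4s))·e^{−8λ} − (49/2048 − λ/4 + (3/64)·(16r − s)² + λ²)·e^{8λ} satisfies the partial differential equation ∂³F₃/∂s²∂r + ∂²F₃/∂λ∂r − 8·∂F₃/∂r = 0 at every point of ℝ³. -/

import Mathlib

/-- The generating function of the genus-3 Donaldson invariants of Σ₃ × ℙ¹:
    F₃(s,λ,r) = (1/2048)·cos(8s)·e^{8λ} + (3/128)·cosh(4s)·e^{−8λ}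
      − (1/32)·(s·sinh(4s) − 4λ·cosh(4s) + 12r·sinh(4s))·e^{−8λ}
      − (49/2048 − λ/4 + (3/64)·(16r − s)² + λ²)·e^{8λ}. -/
noncomputable def F₃ (s l r : ℝ) : ℝ :=
  (1 / 2048) * Real.cos (8 * s) * Real.exp (8 * l)
    + (3 / 128) * Real.cosh (4 * s) * Real.exp (-8 * l)
    - (1 / 32) * (s * Real.sinh (4 * s) - 4 * l * Real.cosh (4 * s)
        + 12 * r * Real.sinh (4 * s)) * Real.exp (-8 * l)
    - (49 / 2048 - l / 4 + (3 / 64) * (16 * r - s) ^ 2 + l ^ 2) * Real.exp (8 * l)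

lemma F₃_hasDerivAt_r (s l r : ℝ) :
    HasDerivAt (fun r' : ℝ => F₃ s l r')
      (-(3/8) * Real.sinh (4*s) * Real.exp (-8*l)
        - (3/2) * (16*r - s) * Real.exp (8*l)) r := by
  have h1 : HasDerivAt (fun r' : ℝ => 16 * r' - s) 16 r := by
    simpa using ((hasDerivAt_id r).const_mul (16:ℝ)).sub_const s
  have h2 : HasDerivAt (fun r' : ℝ => (16 * r' - s) ^ 2) (2 * (16*r - s) * 16) r := by
    simpa using h1.fun_pow 2
  have h3 : HasDerivAt (fun r' : ℝ =>
      s * Real.sinh (4*s) - 4 * l * Real.cosh (4*s) + 12 * r' * Real.sinh (4*s))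
      (12 * Real.sinh (4*s)) r := by
    have := (((hasDerivAt_id r).const_mul (12:ℝ)).mul_const (Real.sinh (4*s))).const_add
      (s * Real.sinh (4*s) - 4 * l * Real.cosh (4*s))
    simpa [mul_comm, mul_assoc, add_comm] using this
  have h4 : HasDerivAt (fun r' : ℝ =>
      49/2048 - l/4 + (3/64) * (16 * r' - s) ^ 2 + l ^ 2)
      ((3/64) * (2 * (16*r - s) * 16)) r :=
    ((h2.const_mul (3/64)).const_add (49/2048 - l/4)).add_const (l ^ 2)
  have h5 : HasDerivAt (fun r' : ℝ => F₃ s l r')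
      (0 - 12 * Real.sinh (4*s) / 32 * Real.exp (-8*l)
        - (3/64) * (2 * (16*r - s) * 16) * Real.exp (8*l)) r := by
    unfold F₃
    have hc : HasDerivAt (fun _ : ℝ =>
        (1/2048) * Real.cos (8*s) * Real.exp (8*l)
          + (3/128) * Real.cosh (4*s) * Real.exp (-8*l)) 0 r := hasDerivAt_const r _
    have := (hc.fun_sub (((h3.const_mul (1/32)).mul_const (Real.exp (-8*l))))).fun_sub
      (h4.mul_const (Real.exp (8*l)))
    exact this.congr_deriv (by ring)
  convert h5 using 1
  ring

lemma F₃_deriv_r (s l r : ℝ) :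
    deriv (fun r' : ℝ => F₃ s l r') r
      = -(3/8) * Real.sinh (4*s) * Real.exp (-8*l)
        - (3/2) * (16*r - s) * Real.exp (8*l) :=
  (F₃_hasDerivAt_r s l r).deriv

/-- F₃ satisfies ∂³F₃/∂s²∂r + ∂²F₃/∂λ∂r − 8·∂F₃/∂r = 0 everywhere
    (the relation α²γ + βγ − 8γ). -/
theorem F₃_pde_third_relation (s l r : ℝ) :
    iteratedDeriv 2 (fun s' => deriv (fun r' => F₃ s' l r') r) s
      + deriv (fun l' => deriv (fun r' => F₃ s l' r') r) l
      - 8 * deriv (fun r' => F₃ s l r') r = 0 := by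
  have hfs : (fun s' => deriv (fun r' => F₃ s' l r') r)
      = fun s' => -(3/8) * Real.sinh (4*s') * Real.exp (-8*l)
        - (3/2) * (16*r - s') * Real.exp (8*l) := funext fun s' => F₃_deriv_r s' l r
  have hfl : (fun l' => deriv (fun r' => F₃ s l' r') r)
      = fun l' => -(3/8) * Real.sinh (4*s) * Real.exp (-8*l')
        - (3/2) * (16*r - s) * Real.exp (8*l') := funext fun l' => F₃_deriv_r s l' r
  -- derivative in s, first order
  have hds : ∀ x : ℝ, HasDerivAt
      (fun s' => -(3/8) * Real.sinh (4*s') * Real.exp (-8*l)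
        - (3/2) * (16*r - s') * Real.exp (8*l))
      (-(3/8) * (4 * Real.cosh (4*x)) * Real.exp (-8*l)
        + (3/2) * Real.exp (8*l)) x := by
    intro x
    have ha : HasDerivAt (fun s' : ℝ => Real.sinh (4*s')) (4 * Real.cosh (4*x)) x := by
      simpa [Function.comp_def, mul_comm] using (Real.hasDerivAt_sinh (4*x)).comp x
        ((hasDerivAt_id x).const_mul (4:ℝ))
    have hb : HasDerivAt (fun s' : ℝ => 16*r - s') (-1 : ℝ) x := by
      simpa using (hasDerivAt_const x (16*r)).fun_sub (hasDerivAt_id x)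
    have := ((ha.const_mul (-(3/8))).mul_const (Real.exp (-8*l))).fun_sub
      ((hb.const_mul (3/2)).mul_const (Real.exp (8*l)))
    exact this.congr_deriv (by ring)
  have hds2 : ∀ x : ℝ, HasDerivAt
      (fun s' => -(3/8) * (4 * Real.cosh (4*s')) * Real.exp (-8*l)
        + (3/2) * Real.exp (8*l))
      (-(3/8) * (4 * (4 * Real.sinh (4*x))) * Real.exp (-8*l)) x := by
    intro x
    have ha : HasDerivAt (fun s' : ℝ => Real.cosh (4*s')) (4 * Real.sinh (4*x)) x := by
      simpa [Function.comp_def, mul_comm] using (Real.hasDerivAt_cosh (4*x)).comp x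
        ((hasDerivAt_id x).const_mul (4:ℝ))
    have := (((ha.const_mul (4:ℝ)).const_mul (-(3/8))).mul_const (Real.exp (-8*l))).add_const
      ((3/2) * Real.exp (8*l))
    convert this using 1
    try ring
  have hit : iteratedDeriv 2 (fun s' => deriv (fun r' => F₃ s' l r') r) s
      = -(3/8) * (4 * (4 * Real.sinh (4*s))) * Real.exp (-8*l) := by
    rw [hfs, iteratedDeriv_succ, iteratedDeriv_one]
    have : (deriv fun s' => -(3/8) * Real.sinh (4*s') * Real.exp (-8*l)
        - (3/2) * (16*r - s') * Real.exp (8*l))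
        = fun x => -(3/8) * (4 * Real.cosh (4*x)) * Real.exp (-8*l)
          + (3/2) * Real.exp (8*l) := funext fun x => (hds x).deriv
    rw [this]
    exact (hds2 s).deriv
  have hdl : deriv (fun l' => deriv (fun r' => F₃ s l' r') r) l
      = -(3/8) * Real.sinh (4*s) * ((-8) * Real.exp (-8*l))
        - (3/2) * (16*r - s) * (8 * Real.exp (8*l)) := by
    rw [hfl]
    have he1 : HasDerivAt (fun l' : ℝ => Real.exp (-8*l')) ((-8) * Real.exp (-8*l)) l := by
      simpa [Function.comp_def, mul_comm] using (Real.hasDerivAt_exp (-8*l)).comp l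
        ((hasDerivAt_id l).const_mul (-8:ℝ))
    have he2 : HasDerivAt (fun l' : ℝ => Real.exp (8*l')) (8 * Real.exp (8*l)) l := by
      simpa [Function.comp_def, mul_comm] using (Real.hasDerivAt_exp (8*l)).comp l
        ((hasDerivAt_id l).const_mul (8:ℝ))
    exact ((he1.const_mul (-(3/8) * Real.sinh (4*s))).sub
      (he2.const_mul ((3/2) * (16*r - s)))).deriv
  rw [hit, hdl, F₃_deriv_r]
  ring
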